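/- arXiv:2003.09844 — 3 statements merged into one kernel-verified Lean document; each statement's English description precedes it below -/
import Mathlib

section
/- For vectors x(1),…,x(N) ∈ ℝᵈ, any w = (w¹,…,wᵏ) with wʲ ∈ ℝᵈ, define a(x,w) ∈ ℝ^{kd} as the stack of blocks 𝟙{xᵀwʲ ≥ 0}·x for j = 1,…,k, and define ā(x) ∈ ℝ^{kd} as the stack of k copies of x. Then λ_max(∑_{i=1}^N ā(x(i)) ā(x(i))ᵀ) ≥ λ_max(∑_{i=1}^N a(x(i),w) a(x(i),w)ᵀ) for every w. -/
open Matrix in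
theorem quad_le_iSup {n : Type*} [Fintype n] [DecidableEq n] [Nonempty n]
    {A : Matrix n n ℝ} (hA : A.IsHermitian) (v : n → ℝ) :
    v ⬝ᵥ A *ᵥ v ≤ (⨆ i, hA.eigenvalues i) * (v ⬝ᵥ v) := by
  set U : Matrix n n ℝ := (hA.eigenvectorUnitary : Matrix n n ℝ) with hU
  set c : n → ℝ := star U *ᵥ v with hc
  have hstar : star U = Uᵀ := U.conjTranspose_eq_transpose_of_trivial
  have hUU : U * star U = 1 := (Matrix.mem_unitaryGroup_iff).mp hA.eigenvectorUnitary.2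
  have hcv : v ᵥ* U = c := by rw [hc, hstar, mulVec_transpose]
  have h1 : v ⬝ᵥ A *ᵥ v = ∑ i, hA.eigenvalues i * (c i)^2 := by
    conv_lhs => rw [hA.spectral_theorem, Unitary.conjStarAlgAut_apply]
    rw [← hU, ← mulVec_mulVec, ← mulVec_mulVec, dotProduct_mulVec, hcv, ← hc]
    simp only [dotProduct, mulVec_diagonal, Function.comp_apply, RCLike.ofReal_real_eq_id,
      id_eq, pow_two]
    exact Finset.sum_congr rfl fun i _ => by ring
  have h2 : v ⬝ᵥ v = ∑ i, (c i)^2 := by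
    have : c ⬝ᵥ c = v ⬝ᵥ v := by
      rw [hc, dotProduct_mulVec, hstar, ← mulVec_transpose, Matrix.transpose_transpose,
        mulVec_mulVec]
      rw [hstar] at hUU
      rw [hUU, one_mulVec]
    rw [← this]
    simp [dotProduct, pow_two]
  rw [h1, h2, Finset.mul_sum]
  apply Finset.sum_le_sum
  intro i _
  apply mul_le_mul_of_nonneg_right _ (sq_nonneg _)
  exact le_ciSup (Set.Finite.bddAbove (Set.finite_range _)) i

open Matrix in
theorem quad_sum_vecMulVec {n ι : Type*} [Fintype n] [Fintype ι] (a : ι → n → ℝ) (v : n → ℝ) :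
    v ⬝ᵥ (∑ i, vecMulVec (a i) (a i)) *ᵥ v = ∑ i, (a i ⬝ᵥ v) ^ 2 := by
  have h : ∀ (b : n → ℝ), v ⬝ᵥ (vecMulVec b b) *ᵥ v = (b ⬝ᵥ v) ^ 2 := by
    intro b
    simp only [Matrix.mulVec, dotProduct, vecMulVec_apply, Finset.mul_sum, pow_two,
      Finset.sum_mul]
    rw [Finset.sum_comm]
    exact Finset.sum_congr rfl fun p _ => Finset.sum_congr rfl fun q _ => by ring
  let F : Matrix n n ℝ →+ ℝ :=
    { toFun := fun M => v ⬝ᵥ M *ᵥ v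
      map_zero' := by simp
      map_add' := fun M N => by simp [add_mulVec, dotProduct_add] }
  exact (map_sum F _ _).trans (Finset.sum_congr rfl fun i _ => h (a i))

/-- The stacked vector `a(x,w)` whose `j`-th block is `𝟙{xᵀwʲ ≥ 0}·x`. -/
noncomputable def avec {k d : ℕ} (x : Fin d → ℝ) (w : Fin k → Fin d → ℝ) :
    Fin k × Fin d → ℝ :=
  fun p => (if 0 ≤ ∑ i, x i * w p.1 i then (1 : ℝ) else 0) * x p.2

/-- The stacked vector `ā(x)` consisting of `k` copies of `x`. -/
def abar {k d : ℕ} (x : Fin d → ℝ) : Fin k × Fin d → ℝ := fun p => x p.2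

open Matrix in
theorem lammax_abar_ge_lammax_a {k d N : ℕ} (X : Fin N → Fin d → ℝ)
    (w : Fin k → Fin d → ℝ)
    (hS : (∑ i, Matrix.vecMulVec (avec (X i) w) (avec (X i) w)).IsHermitian)
    (hSbar : (∑ i, Matrix.vecMulVec (abar (k := k) (X i)) (abar (k := k) (X i))).IsHermitian) :
    ⨆ p, hS.eigenvalues p ≤ ⨆ p, hSbar.eigenvalues p := by
  classical
  rcases isEmpty_or_nonempty (Fin k × Fin d) with h | h
  · rw [iSup_of_empty', iSup_of_empty']
  · have hkne : Nonempty (Fin k) := ⟨h.some.1⟩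
    have hkpos : (0:ℝ) < k := by exact_mod_cast hkne.some.pos
    set c := ⨆ p, hSbar.eigenvalues p with hcdef
    set ind : Fin N → Fin k → ℝ :=
      fun i j => if 0 ≤ ∑ m, X i m * w j m then (1:ℝ) else 0 with hind
    -- the key quadratic-form bound
    have key : ∀ v : Fin k × Fin d → ℝ,
        v ⬝ᵥ (∑ i, Matrix.vecMulVec (avec (X i) w) (avec (X i) w)) *ᵥ v ≤ c * (v ⬝ᵥ v) := by
      intro v
      set t : Fin N → Fin k → ℝ := fun i j => ∑ m, X i m * v (j, m) with ht
      have hdot : ∀ i, avec (X i) w ⬝ᵥ v = ∑ j, ind i j * t i j := by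
        intro i
        rw [dotProduct, Fintype.sum_prod_type]
        refine Finset.sum_congr rfl fun j _ => ?_
        rw [ht, hind]
        simp only [avec, Finset.mul_sum]
        exact Finset.sum_congr rfl fun m _ => by ring
      have hCS : ∀ i, (avec (X i) w ⬝ᵥ v)^2 ≤ (k:ℝ) * ∑ j, (t i j)^2 := by
        intro i
        rw [hdot i]
        calc (∑ j, ind i j * t i j)^2
            ≤ (∑ j, (ind i j)^2) * ∑ j, (t i j)^2 :=
              Finset.sum_mul_sq_le_sq_mul_sq _ _ _
          _ ≤ (k:ℝ) * ∑ j, (t i j)^2 := by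
              apply mul_le_mul_of_nonneg_right _
                (Finset.sum_nonneg fun j _ => sq_nonneg _)
              calc ∑ j, (ind i j)^2 ≤ ∑ _j : Fin k, (1:ℝ) :=
                    Finset.sum_le_sum fun j _ => by
                      rw [hind]; dsimp only; split_ifs <;> norm_num
                _ = (k:ℝ) := by simp
      have hblock : ∀ j, (k:ℝ) * ∑ i, (t i j)^2 ≤ c * ∑ m, v (j, m)^2 := by
        intro j
        set u : Fin k × Fin d → ℝ := fun p => v (j, p.2) with hu
        have h1 := quad_le_iSup hSbar u
        rw [quad_sum_vecMulVec] at h1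
        have h2 : ∀ i, abar (k := k) (X i) ⬝ᵥ u = (k:ℝ) * t i j := by
          intro i
          rw [dotProduct, Fintype.sum_prod_type]
          simp only [abar, hu, ht]
          rw [Finset.sum_const, Finset.card_univ, Fintype.card_fin, nsmul_eq_mul]
        have h3 : u ⬝ᵥ u = (k:ℝ) * ∑ m, v (j, m)^2 := by
          rw [dotProduct, Fintype.sum_prod_type]
          simp only [hu, ← pow_two]
          rw [Finset.sum_const, Finset.card_univ, Fintype.card_fin, nsmul_eq_mul]
        simp only [h2, h3] at h1
        rw [← hcdef] at h1
        have h4 : ∑ i, ((k:ℝ) * t i j)^2 = (k:ℝ) * ((k:ℝ) * ∑ i, (t i j)^2) := by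
          rw [Finset.mul_sum, Finset.mul_sum]
          exact Finset.sum_congr rfl fun i _ => by ring
        rw [h4] at h1
        rw [← mul_le_mul_iff_right₀ hkpos,
          show (k:ℝ) * (c * ∑ m, v (j, m)^2) = c * ((k:ℝ) * ∑ m, v (j, m)^2) by ring]
        exact h1
      calc v ⬝ᵥ (∑ i, Matrix.vecMulVec (avec (X i) w) (avec (X i) w)) *ᵥ v
          = ∑ i, (avec (X i) w ⬝ᵥ v)^2 := quad_sum_vecMulVec _ v
        _ ≤ ∑ i, (k:ℝ) * ∑ j, (t i j)^2 := Finset.sum_le_sum fun i _ => hCS i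
        _ = ∑ j, (k:ℝ) * ∑ i, (t i j)^2 := by
            rw [← Finset.mul_sum, ← Finset.mul_sum, Finset.sum_comm]
        _ ≤ ∑ j, c * ∑ m, v (j, m)^2 := Finset.sum_le_sum fun j _ => hblock j
        _ = c * (v ⬝ᵥ v) := by
            rw [← Finset.mul_sum, dotProduct, Fintype.sum_prod_type]
            congr 1
            exact Finset.sum_congr rfl fun j _ => Finset.sum_congr rfl fun m _ => pow_two _
    refine ciSup_le fun p => ?_
    have he := hS.eigenvalues_eq p
    simp only [star_trivial, RCLike.re_to_real] at he
    have hnorm := hS.eigenvectorBasis.orthonormal.1 p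
    have h5 : (inner ℝ (hS.eigenvectorBasis p) (hS.eigenvectorBasis p) : ℝ) = 1 := by
      rw [real_inner_self_eq_norm_mul_norm, hnorm, mul_one]
    have hb : (⇑(hS.eigenvectorBasis p) : Fin k × Fin d → ℝ) ⬝ᵥ ⇑(hS.eigenvectorBasis p) = 1 := by
      rw [← h5, PiLp.inner_apply]
      simp [dotProduct, pow_two]
    rw [he]
    calc _ ≤ c * ((⇑(hS.eigenvectorBasis p) : Fin k × Fin d → ℝ) ⬝ᵥ ⇑(hS.eigenvectorBasis p)) :=
          key _
      _ = c := by rw [hb, mul_one]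
end

section
/- With the definitions a(x,w) and ā(x) as above, sup over all w of λ_max((1/N)∑_{i=1}^N a(x(i),w) a(x(i),w)ᵀ) equals λ_max((1/N)∑_{i=1}^N ā(x(i)) ā(x(i))ᵀ). -/
open Matrix Finset

section aux
variable {n : Type*} [Fintype n] [DecidableEq n]

omit [DecidableEq n] in
lemma inner_euclid (x y : EuclideanSpace ℝ n) : (inner ℝ x y : ℝ) = ∑ i, x i * y i := by
  simp [PiLp.inner_apply, RCLike.inner_apply, mul_comm]

lemma quad_decomp {A : Matrix n n ℝ} (hA : A.IsHermitian) (v : n → ℝ) :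
    v ⬝ᵥ A *ᵥ v = ∑ i, hA.eigenvalues i *
      (inner ℝ (hA.eigenvectorBasis i) ((WithLp.equiv 2 (n → ℝ)).symm v) : ℝ)^2 := by
  set b := hA.eigenvectorBasis with hb
  set vE : EuclideanSpace ℝ n := (WithLp.equiv 2 (n → ℝ)).symm v with hvE
  have hAT : Aᵀ = A := by ext i j; simpa using congrFun (congrFun hA.eq i) j
  have h1 : v ⬝ᵥ A *ᵥ v = (inner ℝ vE ((WithLp.equiv 2 (n → ℝ)).symm (A *ᵥ v)) : ℝ) := by
    rw [inner_euclid]; rfl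
  rw [h1, ← OrthonormalBasis.sum_inner_mul_inner b]
  refine Finset.sum_congr rfl fun i _ => ?_
  have h2 : (inner ℝ (b i) ((WithLp.equiv 2 (n → ℝ)).symm (A *ᵥ v)) : ℝ)
      = hA.eigenvalues i * (inner ℝ (b i) vE : ℝ) := by
    rw [inner_euclid, inner_euclid]
    have h4 : (⇑(b i)) ⬝ᵥ (A *ᵥ v) = (A *ᵥ ⇑(b i)) ⬝ᵥ v := by
      rw [Matrix.dotProduct_mulVec, ← Matrix.mulVec_transpose, hAT]
    change (⇑(b i)) ⬝ᵥ (A *ᵥ v) = hA.eigenvalues i * ((⇑(b i)) ⬝ᵥ v)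
    rw [h4, hA.mulVec_eigenvectorBasis, smul_dotProduct]
    rfl
  rw [h2, real_inner_comm (b i) vE]
  ring

omit [DecidableEq n] in
lemma parseval_dot (b : OrthonormalBasis n ℝ (EuclideanSpace ℝ n)) (v : n → ℝ) :
    v ⬝ᵥ v = ∑ i, (inner ℝ (b i) ((WithLp.equiv 2 (n → ℝ)).symm v) : ℝ)^2 := by
  set vE : EuclideanSpace ℝ n := (WithLp.equiv 2 (n → ℝ)).symm v with hvE
  have h1 : v ⬝ᵥ v = (inner ℝ vE vE : ℝ) := by rw [inner_euclid]; rfl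
  rw [h1, ← OrthonormalBasis.sum_inner_mul_inner b]
  refine Finset.sum_congr rfl fun i _ => ?_
  rw [real_inner_comm vE (b i)]
  ring

lemma rayleigh_upper [Nonempty n] {A : Matrix n n ℝ} (hA : A.IsHermitian) (v : n → ℝ) :
    v ⬝ᵥ A *ᵥ v ≤ (⨆ i, hA.eigenvalues i) * (v ⬝ᵥ v) := by
  rw [quad_decomp hA v, parseval_dot hA.eigenvectorBasis v, Finset.mul_sum]
  refine Finset.sum_le_sum fun i _ => ?_
  exact mul_le_mul_of_nonneg_right (le_ciSup (Set.Finite.bddAbove (Set.finite_range _)) i)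
    (sq_nonneg _)

lemma eigenvalue_le_of_quad {A : Matrix n n ℝ} (hA : A.IsHermitian) {C : ℝ}
    (h : ∀ v : n → ℝ, v ⬝ᵥ A *ᵥ v ≤ C * (v ⬝ᵥ v)) (i : n) : hA.eigenvalues i ≤ C := by
  have he := hA.eigenvalues_eq i
  set b : n → ℝ := ⇑(hA.eigenvectorBasis i) with hbv
  have hb1 : b ⬝ᵥ b = 1 := by
    have hn := hA.eigenvectorBasis.orthonormal.1 i
    have h2 : (inner ℝ (hA.eigenvectorBasis i) (hA.eigenvectorBasis i) : ℝ) = 1 := by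
      rw [real_inner_self_eq_norm_sq, hn]; norm_num
    rw [inner_euclid] at h2
    exact h2
  have heq : hA.eigenvalues i = b ⬝ᵥ A *ᵥ b := by
    rw [he]; simp [dotProduct]
  rw [heq]
  calc b ⬝ᵥ A *ᵥ b ≤ C * (b ⬝ᵥ b) := h b
    _ = C := by rw [hb1, mul_one]

lemma eig_congr {A B : Matrix n n ℝ} (h : A = B) (hA : A.IsHermitian) (hB : B.IsHermitian) :
    hA.eigenvalues = hB.eigenvalues := by subst h; rfl

lemma quad_smul_sum_vecMulVec {N : ℕ} (c : ℝ) (a : Fin N → n → ℝ) (v : n → ℝ) :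
    v ⬝ᵥ (c • ∑ i, vecMulVec (a i) (a i)) *ᵥ v = c * ∑ i, (a i ⬝ᵥ v)^2 := by
  rw [Matrix.smul_mulVec, dotProduct_smul, smul_eq_mul]
  congr 1
  have hsum : (∑ i, vecMulVec (a i) (a i)) *ᵥ v = ∑ i, vecMulVec (a i) (a i) *ᵥ v :=
    map_sum (Matrix.mulVec.addMonoidHomLeft v) (fun i => vecMulVec (a i) (a i)) Finset.univ
  have hdsum : ∀ (f : Fin N → n → ℝ), v ⬝ᵥ (∑ i, f i) = ∑ i, v ⬝ᵥ f i := fun f => by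
    simp only [dotProduct, Finset.sum_apply, Finset.mul_sum]
    exact Finset.sum_comm
  rw [hsum, hdsum]
  refine Finset.sum_congr rfl fun i _ => ?_
  have : (vecMulVec (a i) (a i)) *ᵥ v = (a i ⬝ᵥ v) • a i := by
    funext j
    simp only [Matrix.mulVec, Matrix.vecMulVec_apply, dotProduct, Pi.smul_apply,
      smul_eq_mul, Finset.sum_mul, Finset.mul_sum]
    exact Finset.sum_congr rfl fun l _ => by ring
  rw [this, dotProduct_smul, smul_eq_mul, dotProduct_comm v (a i), sq]

end aux

theorem sup_lammax_eq_lammax_abar {k d N : ℕ} (X : Fin N → Fin d → ℝ)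
    (hS : ∀ w : Fin k → Fin d → ℝ,
      ((N : ℝ)⁻¹ • ∑ i, Matrix.vecMulVec (avec (X i) w) (avec (X i) w)).IsHermitian)
    (hSbar : ((N : ℝ)⁻¹ •
      ∑ i, Matrix.vecMulVec (abar (k := k) (X i)) (abar (k := k) (X i))).IsHermitian) :
    ⨆ w : Fin k → Fin d → ℝ, ⨆ p, (hS w).eigenvalues p = ⨆ p, hSbar.eigenvalues p := by
  classical
  rcases isEmpty_or_nonempty (Fin k × Fin d) with hemp | hne
  · have h0 : ∀ (f : Fin k × Fin d → ℝ), (⨆ p, f p) = 0 := fun f =>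
      Real.iSup_of_isEmpty f
    simp only [h0]
    exact ciSup_const
  have hkpos : 0 < (k : ℝ) := by
    have : Nonempty (Fin k) := ⟨hne.some.1⟩
    exact_mod_cast Fin.pos_iff_nonempty.2 this
  set L : ℝ := ⨆ p, hSbar.eigenvalues p with hL
  -- the key quadratic form bound
  have hquad : ∀ (w : Fin k → Fin d → ℝ) (v : Fin k × Fin d → ℝ),
      v ⬝ᵥ ((N : ℝ)⁻¹ • ∑ i, Matrix.vecMulVec (avec (X i) w) (avec (X i) w)) *ᵥ v
        ≤ L * (v ⬝ᵥ v) := by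
    intro w v
    set c : Fin N → Fin k → ℝ := fun i j => ∑ l, X i l * v (j, l) with hc
    -- bound each w-dependent dot product via Cauchy-Schwarz
    have hdot : ∀ i : Fin N, (avec (X i) w ⬝ᵥ v)^2 ≤ (k : ℝ) * ∑ j, (c i j)^2 := by
      intro i
      have h1 : avec (X i) w ⬝ᵥ v
          = ∑ j, (if 0 ≤ ∑ l, X i l * w j l then (1:ℝ) else 0) * c i j := by
        rw [dotProduct, Fintype.sum_prod_type]
        refine Finset.sum_congr rfl fun j _ => ?_
        rw [hc]; simp only [avec, Finset.mul_sum]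
        exact Finset.sum_congr rfl fun l _ => by ring
      rw [h1]
      calc (∑ j, (if 0 ≤ ∑ l, X i l * w j l then (1:ℝ) else 0) * c i j)^2
          ≤ (∑ j, (if 0 ≤ ∑ l, X i l * w j l then (1:ℝ) else 0)^2) * ∑ j, (c i j)^2 :=
            Finset.sum_mul_sq_le_sq_mul_sq _ _ _
        _ ≤ (k : ℝ) * ∑ j, (c i j)^2 := by
            refine mul_le_mul_of_nonneg_right ?_
              (Finset.sum_nonneg fun j _ => sq_nonneg _)
            calc (∑ j, (if 0 ≤ ∑ l, X i l * w j l then (1:ℝ) else 0)^2)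
                ≤ ∑ _j : Fin k, (1:ℝ) := Finset.sum_le_sum fun j _ => by
                  split <;> norm_num
              _ = (k : ℝ) := by simp
    -- per-block bound from the Rayleigh quotient of the abar matrix
    have hblock : ∀ j₀ : Fin k,
        (k : ℝ) * ((N : ℝ)⁻¹ * ∑ i, (c i j₀)^2) ≤ L * ∑ l, (v (j₀, l))^2 := by
      intro j₀
      set u : Fin k × Fin d → ℝ := fun p => v (j₀, p.2) with hu
      have hray := rayleigh_upper hSbar u
      rw [quad_smul_sum_vecMulVec] at hray
      have hud : ∀ i, abar (k := k) (X i) ⬝ᵥ u = (k : ℝ) * c i j₀ := by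
        intro i
        rw [dotProduct, Fintype.sum_prod_type]
        simp only [abar, hu, hc]
        rw [Finset.sum_const, Finset.card_univ, Fintype.card_fin, nsmul_eq_mul]
      have huu : u ⬝ᵥ u = (k : ℝ) * ∑ l, (v (j₀, l))^2 := by
        rw [dotProduct, Fintype.sum_prod_type]
        simp only [hu]
        rw [Finset.sum_const, Finset.card_univ, Fintype.card_fin, nsmul_eq_mul]
        congr 1
        exact Finset.sum_congr rfl fun l _ => (pow_two _).symm
      have h2 : (N : ℝ)⁻¹ * ∑ i, ((k:ℝ) * c i j₀)^2
          = (k : ℝ) * ((k : ℝ) * ((N : ℝ)⁻¹ * ∑ i, (c i j₀)^2)) := by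
        have hss : ∑ i, ((k:ℝ) * c i j₀)^2 = (k:ℝ)^2 * ∑ i, (c i j₀)^2 := by
          rw [Finset.mul_sum]
          exact Finset.sum_congr rfl fun i _ => by ring
        rw [hss]; ring
      simp only [hud] at hray
      rw [h2, huu] at hray
      have h3 : (k:ℝ) * ((k : ℝ) * ((N : ℝ)⁻¹ * ∑ i, (c i j₀)^2))
          ≤ (k:ℝ) * (L * ∑ l, (v (j₀, l))^2) :=
        hray.trans_eq (by ring)
      exact le_of_mul_le_mul_left h3 hkpos
    -- combine
    rw [quad_smul_sum_vecMulVec]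
    calc (N : ℝ)⁻¹ * ∑ i, (avec (X i) w ⬝ᵥ v)^2
        ≤ (N : ℝ)⁻¹ * ∑ i, ((k:ℝ) * ∑ j, (c i j)^2) := by
          refine mul_le_mul_of_nonneg_left (Finset.sum_le_sum fun i _ => hdot i)
            (by positivity)
      _ = ∑ j₀, (k : ℝ) * ((N : ℝ)⁻¹ * ∑ i, (c i j₀)^2) := by
          rw [Finset.mul_sum]
          simp_rw [Finset.mul_sum]
          rw [Finset.sum_comm]
          exact Finset.sum_congr rfl fun j _ => Finset.sum_congr rfl fun i _ => by ring
      _ ≤ ∑ j₀, L * ∑ l, (v (j₀, l))^2 := Finset.sum_le_sum fun j₀ _ => hblock j₀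
      _ = L * (v ⬝ᵥ v) := by
          rw [← Finset.mul_sum, dotProduct, Fintype.sum_prod_type]
          congr 1
          exact Finset.sum_congr rfl fun j _ => Finset.sum_congr rfl fun l _ => pow_two _
  have hub : ∀ w, (⨆ p, (hS w).eigenvalues p) ≤ L := fun w =>
    ciSup_le (eigenvalue_le_of_quad (hS w) (hquad w))
  refine le_antisymm (ciSup_le hub) ?_
  -- lower bound: take w = 0
  have hMeq : ((N : ℝ)⁻¹ • ∑ i, Matrix.vecMulVec (avec (X i) 0) (avec (X i) 0))
      = (N : ℝ)⁻¹ • ∑ i, Matrix.vecMulVec (abar (k := k) (X i)) (abar (k := k) (X i)) := by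
    congr 1
    refine Finset.sum_congr rfl fun i _ => ?_
    have : avec (X i) 0 = abar (k := k) (X i) := by
      funext p
      simp [avec, abar]
    rw [this]
  have heig : (hS 0).eigenvalues = hSbar.eigenvalues := eig_congr hMeq (hS 0) hSbar
  have h0 : (⨆ p, (hS 0).eigenvalues p) = L := by rw [heig]
  refine le_ciSup_of_le ⟨L, ?_⟩ 0 h0.ge
  rintro x ⟨w, rfl⟩
  exact hub w
end

section
/- Brauer's ovals of Cassini bound: for an n×n real matrix A (n ≥ 2) with real eigenvalue λ, there exist indices i ≠ j such that |λ - a_{ii}|·|λ - a_{jj}| ≤ R_i(A)·R_j(A), where R_i(A) = ∑_{l≠i}|a_{il}|. -/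
theorem brauer_ovals_of_cassini {n : ℕ} (hn : 2 ≤ n)
    (A : Matrix (Fin n) (Fin n) ℝ) (μ : ℝ)
    (v : Fin n → ℝ) (hv : v ≠ 0) (heig : A.mulVec v = μ • v) :
    ∃ i j : Fin n, i ≠ j ∧
      |μ - A i i| * |μ - A j j| ≤
        (∑ l ∈ Finset.univ.erase i, |A i l|) * (∑ l ∈ Finset.univ.erase j, |A j l|) := by
  classical
  have hvk : ∀ k, (μ - A k k) * v k = ∑ l ∈ Finset.univ.erase k, A k l * v l := by
    intro k
    have h := congrFun heig k
    simp only [Matrix.mulVec, dotProduct, Pi.smul_apply, smul_eq_mul] at h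
    have hs : ∑ l, A k l * v l = A k k * v k + ∑ l ∈ Finset.univ.erase k, A k l * v l :=
      (Finset.add_sum_erase _ _ (Finset.mem_univ k)).symm
    linear_combination hs - h
  have key : ∀ k m, (∀ l, l ≠ k → |v l| ≤ |v m|) →
      |μ - A k k| * |v k| ≤ (∑ l ∈ Finset.univ.erase k, |A k l|) * |v m| := by
    intro k m hm
    rw [← abs_mul, hvk k]
    calc |∑ l ∈ Finset.univ.erase k, A k l * v l|
        ≤ ∑ l ∈ Finset.univ.erase k, |A k l * v l| := Finset.abs_sum_le_sum_abs _ _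
      _ ≤ ∑ l ∈ Finset.univ.erase k, |A k l| * |v m| := by
          apply Finset.sum_le_sum
          intro l hl
          rw [abs_mul]
          exact mul_le_mul_of_nonneg_left (hm l (Finset.ne_of_mem_erase hl)) (abs_nonneg _)
      _ = (∑ l ∈ Finset.univ.erase k, |A k l|) * |v m| := by rw [Finset.sum_mul]
  obtain ⟨i, -, hi⟩ := Finset.exists_max_image Finset.univ (fun k => |v k|)
      ⟨⟨0, by omega⟩, Finset.mem_univ _⟩
  have hne : (Finset.univ.erase i).Nonempty := by
    rw [← Finset.card_pos, Finset.card_erase_of_mem (Finset.mem_univ i), Finset.card_univ,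
      Fintype.card_fin]
    omega
  obtain ⟨j, hjmem, hj⟩ := Finset.exists_max_image (Finset.univ.erase i) (fun k => |v k|) hne
  have hij : i ≠ j := (Finset.ne_of_mem_erase hjmem).symm
  refine ⟨i, j, hij, ?_⟩
  have hRnonneg : ∀ k : Fin n, (0:ℝ) ≤ ∑ l ∈ Finset.univ.erase k, |A k l| :=
    fun k => Finset.sum_nonneg fun l _ => abs_nonneg _
  have hvi : 0 < |v i| := by
    obtain ⟨k, hk⟩ := Function.ne_iff.mp hv
    exact lt_of_lt_of_le (abs_pos.mpr hk) (hi k (Finset.mem_univ k))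
  have h1 : |μ - A i i| * |v i| ≤ (∑ l ∈ Finset.univ.erase i, |A i l|) * |v j| := by
    apply key
    intro l hl
    exact hj l (Finset.mem_erase.mpr ⟨hl, Finset.mem_univ l⟩)
  have h2 : |μ - A j j| * |v j| ≤ (∑ l ∈ Finset.univ.erase j, |A j l|) * |v i| := by
    apply key
    intro l _
    exact hi l (Finset.mem_univ l)
  rcases eq_or_lt_of_le (abs_nonneg (v j)) with hvj | hvj
  · have h1' := h1
    rw [← hvj, mul_zero] at h1'
    have hA : |μ - A i i| = 0 :=
      le_antisymm (by nlinarith) (abs_nonneg _)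
    rw [hA, zero_mul]
    exact mul_nonneg (hRnonneg i) (hRnonneg j)
  · have h3 := mul_le_mul h1 h2 (mul_nonneg (abs_nonneg _) (abs_nonneg _))
      (mul_nonneg (hRnonneg i) (abs_nonneg _))
    nlinarith [mul_pos hvi hvj]
end
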